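/- The Sorokin-type rational functions defined recursively by S_0(w) = 1/(1-w) and S_n(p_1,q_1;…;p_n,q_n;w) = w^{q_n} · (1/(p_n+q_n)!) d^{p_n+q_n}/dw^{p_n+q_n} [ w^{p_n} S_{n-1}(p_1,q_1;…;p_{n-1},q_{n-1};w) ] satisfy, for |w| < 1: S_n(p_1,q_1;…;p_n,q_n;w) = Σ_{k=0}^∞ C(k+p_1, p_1+q_1) ⋯ C(k+p_n, p_n+q_n) w^k. -/

import Mathlib

open scoped Nat

/-- Auxiliary recursion for Sorokin-type rational functions, peeling the
outermost (i.e. last) index pair from the head of the list. -/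
noncomputable def SorAux : List (ℕ × ℕ) → ℂ → ℂ
  | [], w => 1 / (1 - w)
  | (p, q) :: rest, w =>
      w ^ q * ((1 / ((p + q)! : ℂ)) *
        iteratedDeriv (p + q) (fun x : ℂ => x ^ p * SorAux rest x) w)

/-- The Sorokin-type rational function `S_n(p_1,q_1;…;p_n,q_n;w)`:
`S_0(w) = 1/(1-w)` and `S_n = w^{q_n} D_{p_n+q_n}(w^{p_n} S_{n-1})`. -/
noncomputable def Sor (L : List (ℕ × ℕ)) (w : ℂ) : ℂ := SorAux L.reverse w

section Aux

/-- Differentiation operator on power-series coefficients (with shift). -/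
private def Dop (a : ℕ → ℂ) : ℕ → ℂ := fun k => ((k : ℂ) + 1) * a (k + 1)

private lemma Dop_iterate (n : ℕ) : ∀ (a : ℕ → ℂ) (k : ℕ),
    (Dop^[n]) a k = ((k + n).descFactorial n : ℂ) * a (k + n) := by
  induction n with
  | zero => intro a k; simp
  | succ n ih =>
      intro a k
      rw [Function.iterate_succ_apply, ih (Dop a) k]
      simp only [Dop]
      rw [show k + (n + 1) = (k + n) + 1 by ring, Nat.succ_descFactorial_succ]
      push_cast
      ring

private lemma summable_poly_geo (d : ℕ) {r : ℝ} (hr : |r| < 1) :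
    Summable fun k : ℕ => ((k : ℝ) + 1) ^ d * r ^ k := by
  have h : ∀ k : ℕ, ((k : ℝ) + 1) ^ d * r ^ k
      = ∑ j ∈ Finset.range (d + 1), (d.choose j : ℝ) * ((k : ℝ) ^ j * r ^ k) := by
    intro k
    rw [add_pow, Finset.sum_mul]
    exact Finset.sum_congr rfl fun j hj => by ring
  simp_rw [h]
  refine summable_sum fun j hj => Summable.mul_left _ ?_
  exact summable_pow_mul_geometric_of_norm_lt_one j (by rwa [Real.norm_eq_abs])

private lemma bound_nonneg {a : ℕ → ℂ} {C : ℝ} {d : ℕ}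
    (hb : ∀ k, ‖a k‖ ≤ C * ((k : ℝ) + 1) ^ d) : 0 ≤ C := by
  have := hb 0
  simp only [Nat.cast_zero, zero_add, one_pow, mul_one] at this
  exact le_trans (norm_nonneg _) this

private lemma summable_coef {a : ℕ → ℂ} {C : ℝ} {d : ℕ}
    (hb : ∀ k, ‖a k‖ ≤ C * ((k : ℝ) + 1) ^ d) {x : ℂ} (hx : ‖x‖ < 1) :
    Summable fun k => a k * x ^ k := by
  refine Summable.of_norm ?_
  have hs : Summable fun k : ℕ => C * (((k : ℝ) + 1) ^ d * ‖x‖ ^ k) :=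
    (summable_poly_geo d (by rwa [abs_of_nonneg (norm_nonneg x)])).mul_left C
  refine hs.of_nonneg_of_le (fun k => norm_nonneg _) fun k => ?_
  rw [norm_mul, norm_pow]
  calc ‖a k‖ * ‖x‖ ^ k ≤ (C * ((k : ℝ) + 1) ^ d) * ‖x‖ ^ k :=
        mul_le_mul_of_nonneg_right (hb k) (by positivity)
    _ = _ := by ring

private lemma Dop_bound {a : ℕ → ℂ} {C : ℝ} {d : ℕ}
    (hb : ∀ k, ‖a k‖ ≤ C * ((k : ℝ) + 1) ^ d) :
    ∀ k, ‖Dop a k‖ ≤ (2 ^ d * C) * ((k : ℝ) + 1) ^ (d + 1) := by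
  intro k
  have hC := bound_nonneg hb
  simp only [Dop, norm_mul]
  have h1 : ‖((k : ℂ) + 1)‖ = (k : ℝ) + 1 := by
    rw [show ((k : ℂ) + 1) = (((k + 1 : ℕ) : ℕ) : ℂ) by push_cast; ring, Complex.norm_natCast]
    push_cast; ring
  have h2 : ((k + 1 : ℕ) : ℝ) + 1 ≤ 2 * ((k : ℝ) + 1) := by push_cast; linarith
  calc ‖(k : ℂ) + 1‖ * ‖a (k + 1)‖ ≤ ((k : ℝ) + 1) * (C * (((k + 1 : ℕ) : ℝ) + 1) ^ d) := by
        rw [h1]; exact mul_le_mul_of_nonneg_left (hb (k + 1)) (by positivity)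
    _ ≤ ((k : ℝ) + 1) * (C * (2 * ((k : ℝ) + 1)) ^ d) := by
        have : (((k + 1 : ℕ) : ℝ) + 1) ^ d ≤ (2 * ((k : ℝ) + 1)) ^ d :=
          pow_le_pow_left₀ (by positivity) h2 d
        have h3 : C * (((k + 1 : ℕ) : ℝ) + 1) ^ d ≤ C * (2 * ((k : ℝ) + 1)) ^ d :=
          mul_le_mul_of_nonneg_left this hC
        exact mul_le_mul_of_nonneg_left h3 (by positivity)
    _ = (2 ^ d * C) * ((k : ℝ) + 1) ^ (d + 1) := by rw [mul_pow]; ring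

private lemma iter_bound (n : ℕ) : ∀ (a : ℕ → ℂ) (C : ℝ) (d : ℕ),
    (∀ k, ‖a k‖ ≤ C * ((k : ℝ) + 1) ^ d) →
    ∃ C' : ℝ, ∃ d' : ℕ, ∀ k, ‖(Dop^[n]) a k‖ ≤ C' * ((k : ℝ) + 1) ^ d' := by
  induction n with
  | zero => intro a C d hb; exact ⟨C, d, hb⟩
  | succ n ih =>
      intro a C d hb
      obtain ⟨C', d', h⟩ := ih (Dop a) _ _ (Dop_bound hb)
      exact ⟨C', d', by simpa [Function.iterate_succ_apply] using h⟩

private lemma hasDerivAt_series {a : ℕ → ℂ} {C : ℝ} {d : ℕ}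
    (hb : ∀ k, ‖a k‖ ≤ C * ((k : ℝ) + 1) ^ d) {w : ℂ} (hw : ‖w‖ < 1) :
    HasDerivAt (fun x : ℂ => ∑' k, a k * x ^ k) (∑' k, Dop a k * w ^ k) w := by
  have hC := bound_nonneg hb
  set r : ℝ := (1 + ‖w‖) / 2 with hrdef
  have hw0 : (0 : ℝ) ≤ ‖w‖ := norm_nonneg w
  have hr0 : 0 < r := by positivity
  have hrw : ‖w‖ < r := by rw [hrdef]; linarith
  have hr1 : r < 1 := by rw [hrdef]; linarith
  set u : ℕ → ℝ := fun n => (2 : ℝ) ^ d * C * (((n : ℝ) + 1) ^ (d + 1) * r ^ (n - 1)) with hu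
  have hus : Summable u := by
    rw [← summable_nat_add_iff 1]
    have base : Summable fun n : ℕ =>
        ((2 : ℝ) ^ d * C * 2 ^ (d + 1)) * (((n : ℝ) + 1) ^ (d + 1) * r ^ n) :=
      (summable_poly_geo (d + 1) (by rw [abs_of_nonneg hr0.le]; exact hr1)).mul_left _
    refine base.of_nonneg_of_le
      (fun n => mul_nonneg (mul_nonneg (by positivity) hC) (by positivity)) fun n => ?_
    simp only [hu, Nat.add_sub_cancel]
    have h2 : ((n + 1 : ℕ) : ℝ) + 1 ≤ 2 * ((n : ℝ) + 1) := by push_cast; linarith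
    have h3 : (((n + 1 : ℕ) : ℝ) + 1) ^ (d + 1) ≤ 2 ^ (d + 1) * ((n : ℝ) + 1) ^ (d + 1) := by
      calc (((n + 1 : ℕ) : ℝ) + 1) ^ (d + 1) ≤ (2 * ((n : ℝ) + 1)) ^ (d + 1) :=
            pow_le_pow_left₀ (by positivity) h2 _
        _ = _ := by rw [mul_pow]
    calc (2 : ℝ) ^ d * C * ((((n + 1 : ℕ) : ℝ) + 1) ^ (d + 1) * r ^ n)
        ≤ (2 : ℝ) ^ d * C * ((2 ^ (d + 1) * ((n : ℝ) + 1) ^ (d + 1)) * r ^ n) := by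
          refine mul_le_mul_of_nonneg_left ?_ (by positivity)
          exact mul_le_mul_of_nonneg_right h3 (by positivity)
      _ = ((2 : ℝ) ^ d * C * 2 ^ (d + 1)) * (((n : ℝ) + 1) ^ (d + 1) * r ^ n) := by ring
  have hball : w ∈ Metric.ball (0 : ℂ) r := by
    rw [Metric.mem_ball, dist_zero_right]; exact hrw
  have hg' : ∀ n : ℕ, ∀ y : ℂ, y ∈ Metric.ball (0 : ℂ) r →
      ‖a n * ((n : ℂ) * y ^ (n - 1))‖ ≤ u n := by
    intro n y hy
    have hyr : ‖y‖ < r := by rwa [Metric.mem_ball, dist_zero_right] at hy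
    have hnn : ‖((n : ℂ))‖ = (n : ℝ) := Complex.norm_natCast n
    rw [norm_mul, norm_mul, norm_pow, hnn]
    calc ‖a n‖ * ((n : ℝ) * ‖y‖ ^ (n - 1))
        ≤ (C * ((n : ℝ) + 1) ^ d) * (((n : ℝ) + 1) * r ^ (n - 1)) := by
          refine mul_le_mul (hb n) ?_ (by positivity) (by positivity)
          refine mul_le_mul (by linarith [Nat.cast_nonneg (α := ℝ) n]) ?_ (by positivity)
            (by positivity)
          exact pow_le_pow_left₀ (norm_nonneg y) hyr.le _
      _ = C * (((n : ℝ) + 1) ^ (d + 1) * r ^ (n - 1)) := by rw [pow_succ]; ring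
      _ ≤ u n := by
          rw [hu]
          refine mul_le_mul_of_nonneg_right ?_ (by positivity)
          nlinarith [one_le_pow₀ (show (1:ℝ) ≤ 2 by norm_num) (n := d)]
  have key := hasDerivAt_tsum_of_isPreconnected hus Metric.isOpen_ball
    (convex_ball (0 : ℂ) r).isPreconnected
    (fun n y (_ : y ∈ Metric.ball (0 : ℂ) r) => (hasDerivAt_pow n y).const_mul (a n))
    hg' (Metric.mem_ball_self hr0)
    (summable_coef hb (by simp : ‖(0 : ℂ)‖ < 1)) hball
  have hsum' : Summable fun n : ℕ => a n * ((n : ℂ) * w ^ (n - 1)) := by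
    refine Summable.of_norm (hus.of_nonneg_of_le (fun n => norm_nonneg _) fun n => ?_)
    exact hg' n w hball
  have heq : ∑' n : ℕ, a n * ((n : ℂ) * w ^ (n - 1)) = ∑' k, Dop a k * w ^ k := by
    rw [Summable.tsum_eq_zero_add hsum']
    simp only [Nat.cast_zero, zero_mul, mul_zero, zero_add, Nat.add_sub_cancel]
    refine tsum_congr fun k => ?_
    simp only [Dop]
    push_cast
    ring
  rw [← heq]
  exact key

private lemma iteratedDeriv_series (n : ℕ) : ∀ (f : ℂ → ℂ) (a : ℕ → ℂ) (C : ℝ) (d : ℕ),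
    (∀ k, ‖a k‖ ≤ C * ((k : ℝ) + 1) ^ d) → (∀ x : ℂ, ‖x‖ < 1 → f x = ∑' k, a k * x ^ k) →
    ∀ w : ℂ, ‖w‖ < 1 → iteratedDeriv n f w = ∑' k, (Dop^[n]) a k * w ^ k := by
  induction n with
  | zero => intro f a C d hb hf w hw; simpa using hf w hw
  | succ n ih =>
      intro f a C d hb hf w hw
      rw [iteratedDeriv_succ]
      have hEq : iteratedDeriv n f =ᶠ[nhds w] fun x => ∑' k, (Dop^[n]) a k * x ^ k := by
        have hmem : Metric.ball (0 : ℂ) 1 ∈ nhds w :=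
          Metric.isOpen_ball.mem_nhds (by rw [Metric.mem_ball, dist_zero_right]; exact hw)
        filter_upwards [hmem] with x hx
        exact ih f a C d hb hf x (by rwa [Metric.mem_ball, dist_zero_right] at hx)
      rw [hEq.deriv_eq]
      obtain ⟨C', d', hb'⟩ := iter_bound n a C d hb
      rw [Function.iterate_succ_apply']
      exact (hasDerivAt_series hb' hw).deriv

/-- The coefficients of the power series of `SorAux M`. -/
private def coef (M : List (ℕ × ℕ)) (k : ℕ) : ℂ :=
  (M.map fun pq => ((k + pq.1).choose (pq.1 + pq.2) : ℂ)).prod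

private lemma coef_cons (p q : ℕ) (rest : List (ℕ × ℕ)) (k : ℕ) :
    coef ((p, q) :: rest) k = ((k + p).choose (p + q) : ℂ) * coef rest k := by
  simp [coef]

private lemma coef_bound (M : List (ℕ × ℕ)) :
    ∃ C : ℝ, ∃ d : ℕ, 0 ≤ C ∧ ∀ k, ‖coef M k‖ ≤ C * ((k : ℝ) + 1) ^ d := by
  induction M with
  | nil => exact ⟨1, 0, by norm_num, fun k => by norm_num [coef]⟩
  | cons pq rest ih =>
      obtain ⟨C, d, hC, h⟩ := ih
      obtain ⟨p, q⟩ := pq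
      refine ⟨((p : ℝ) + 1) ^ (p + q) * C, d + (p + q), by positivity, fun k => ?_⟩
      rw [coef_cons, norm_mul]
      have h1 : ‖(((k + p).choose (p + q) : ℕ) : ℂ)‖ ≤ (((p : ℝ) + 1) * ((k : ℝ) + 1)) ^ (p + q) := by
        rw [Complex.norm_natCast]
        calc ((k + p).choose (p + q) : ℝ) ≤ ((k + p : ℕ) : ℝ) ^ (p + q) := by
              exact_mod_cast Nat.choose_le_pow (k + p) (p + q)
          _ ≤ (((p : ℝ) + 1) * ((k : ℝ) + 1)) ^ (p + q) := by
              refine pow_le_pow_left₀ (by positivity) ?_ _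
              push_cast
              nlinarith [Nat.cast_nonneg (α := ℝ) k, Nat.cast_nonneg (α := ℝ) p]
      calc ‖(((k + p).choose (p + q) : ℕ) : ℂ)‖ * ‖coef rest k‖
          ≤ (((p : ℝ) + 1) * ((k : ℝ) + 1)) ^ (p + q) * (C * ((k : ℝ) + 1) ^ d) :=
            mul_le_mul h1 (h k) (norm_nonneg _) (by positivity)
        _ = (((p : ℝ) + 1) ^ (p + q) * C) * ((k : ℝ) + 1) ^ (d + (p + q)) := by
            rw [mul_pow, pow_add]; ring

private lemma SorAux_hasSum (M : List (ℕ × ℕ)) : ∀ w : ℂ, ‖w‖ < 1 →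
    HasSum (fun k => coef M k * w ^ k) (SorAux M w) := by
  induction M with
  | nil =>
      intro w hw
      have h := hasSum_geometric_of_norm_lt_one hw
      have : SorAux [] w = (1 - w)⁻¹ := by simp [SorAux, one_div]
      rw [this]
      refine h.congr_fun fun k => ?_
      simp [coef]
  | cons pq rest ih =>
      obtain ⟨p, q⟩ := pq
      intro w hw
      obtain ⟨Cc, dc, hCc, hc⟩ := coef_bound rest
      set b : ℕ → ℂ := fun k => if p ≤ k then coef rest (k - p) else 0 with hbdef
      have hbb : ∀ k, ‖b k‖ ≤ Cc * ((k : ℝ) + 1) ^ dc := by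
        intro k
        by_cases h : p ≤ k
        · simp only [hbdef, if_pos h]
          refine (hc (k - p)).trans ?_
          refine mul_le_mul_of_nonneg_left ?_ hCc
          refine pow_le_pow_left₀ (by positivity) ?_ _
          have : ((k - p : ℕ) : ℝ) ≤ (k : ℝ) := by exact_mod_cast Nat.sub_le k p
          linarith
        · simp only [hbdef, if_neg h, norm_zero]
          positivity
      have hf : ∀ x : ℂ, ‖x‖ < 1 → HasSum (fun k => b k * x ^ k) (x ^ p * SorAux rest x) := by
        intro x hx
        have h1 := (ih x hx).mul_left (x ^ p)
        have hinj : Function.Injective (· + p : ℕ → ℕ) := add_left_injective _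
        have hz : ∀ m ∉ Set.range (· + p : ℕ → ℕ), b m * x ^ m = 0 := by
          intro m hm
          have hmp : ¬ p ≤ m := by
            intro h; exact hm ⟨m - p, show m - p + p = m by omega⟩
          simp [hbdef, hmp]
        refine (hinj.hasSum_iff hz).mp ?_
        have hcomp : ((fun k => b k * x ^ k) ∘ (· + p)) = fun k => x ^ p * (coef rest k * x ^ k) := by
          funext k
          have hb' : b (k + p) = coef rest k := by
            simp [hbdef, Nat.le_add_left, Nat.add_sub_cancel]
          simp only [Function.comp_apply]
          rw [hb', pow_add]; ring
        rw [hcomp]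
        exact h1
      have hfx : ∀ x : ℂ, ‖x‖ < 1 → (fun x : ℂ => x ^ p * SorAux rest x) x = ∑' k, b k * x ^ k :=
        fun x hx => ((hf x hx).tsum_eq).symm
      have hiter := iteratedDeriv_series (p + q) (fun x : ℂ => x ^ p * SorAux rest x)
        b Cc dc hbb hfx w hw
      obtain ⟨C2, d2, hb2⟩ := iter_bound (p + q) b Cc dc hbb
      have hHasSum2 : HasSum (fun k => (Dop^[p + q]) b k * w ^ k)
          (iteratedDeriv (p + q) (fun x : ℂ => x ^ p * SorAux rest x) w) := by
        rw [hiter]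
        exact (summable_coef hb2 hw).hasSum
      have h3 := hHasSum2.mul_left (w ^ q * (1 / ((p + q)! : ℂ)))
      have hS : SorAux ((p, q) :: rest) w = w ^ q * (1 / ((p + q)! : ℂ)) *
          iteratedDeriv (p + q) (fun x : ℂ => x ^ p * SorAux rest x) w := by
        rw [SorAux, mul_assoc]
      have hfac : ((p + q)! : ℂ) ≠ 0 := by
        exact_mod_cast (p + q).factorial_ne_zero
      have heq : (fun k => w ^ q * (1 / ((p + q)! : ℂ)) * ((Dop^[p + q]) b k * w ^ k))
          = fun k => coef ((p, q) :: rest) (k + q) * w ^ (k + q) := by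
        funext k
        have hb' : b (k + (p + q)) = coef rest (k + q) := by
          have h1 : p ≤ k + (p + q) := by omega
          have h2 : k + (p + q) - p = k + q := by omega
          simp [hbdef, h1, h2]
        rw [Dop_iterate, hb', coef_cons]
        have hdesc : (((k + (p + q)).descFactorial (p + q) : ℕ) : ℂ)
            = ((p + q)! : ℂ) * (((k + (p + q)).choose (p + q) : ℕ) : ℂ) := by
          exact_mod_cast congrArg (Nat.cast (R := ℂ))
            (Nat.descFactorial_eq_factorial_mul_choose (k + (p + q)) (p + q))
        rw [hdesc, show k + q + p = k + (p + q) by omega, pow_add]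
        field_simp
      rw [heq] at h3
      rw [← hS] at h3
      have hinj : Function.Injective (· + q : ℕ → ℕ) := add_left_injective _
      refine (hinj.hasSum_iff ?_).mp ?_
      · intro m hm
        have hq : m < q := by
          by_contra h
          exact hm ⟨m - q, show m - q + q = m by omega⟩
        have hch : (m + p).choose (p + q) = 0 := Nat.choose_eq_zero_of_lt (by omega)
        simp [coef_cons, hch]
      · exact h3

end Aux

theorem Sor_eq_series (L : List (ℕ × ℕ)) (w : ℂ) (hw : ‖w‖ < 1) :
    HasSum
      (fun k : ℕ => (L.map fun pq => ((k + pq.1).choose (pq.1 + pq.2) : ℂ)).prod * w ^ k)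
      (Sor L w) := by
  have h := SorAux_hasSum L.reverse w hw
  rw [Sor]
  refine h.congr_fun fun k => ?_
  have : coef L.reverse k = (L.map fun pq => ((k + pq.1).choose (pq.1 + pq.2) : ℂ)).prod := by
    rw [coef, List.map_reverse, List.prod_reverse]
  rw [this]
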